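/- arXiv:2302.14519 — 2 statements merged into one kernel-verified Lean document; each statement's English description precedes it below -/
import Mathlib

section
/- Let a : ℕ → ℂ, let χ : ℕ → ℂ be completely multiplicative with |χ(n)| = 1 for every n ≥ 1, and let θ ∈ ℝ. If for every ε > 0 the partial sums of ∑_{n≥1} a(n) n^{-s} converge uniformly on {s : Re s ≥ θ + ε}, then for every ε > 0 the partial sums of the twisted series ∑_{n≥1} a(n) χ(n) n^{-s} also converge uniformly on {s : Re s ≥ θ + ε}. -/
open Filter Topology Finset Complex

lemma avg_exp_tendsto (ω : ℝ) :
    Tendsto (fun T : ℝ => (1/T) * ∫ t in (0:ℝ)..T, Complex.exp (ω * t * Complex.I))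
      atTop (nhds (if ω = 0 then 1 else 0)) := by
  rcases eq_or_ne ω 0 with h | h
  · simp only [h, if_pos rfl, Complex.ofReal_zero, zero_mul, Complex.exp_zero]
    have hev : ∀ᶠ T : ℝ in atTop, (1:ℂ) = (1/T : ℂ) * ∫ t in (0:ℝ)..T, (1:ℂ) := by
      filter_upwards [eventually_gt_atTop (0:ℝ)] with T hT
      rw [intervalIntegral.integral_const]
      simp only [sub_zero, real_smul, mul_one, one_div]
      rw [inv_mul_cancel₀ (Complex.ofReal_ne_zero.mpr hT.ne')]
    exact tendsto_const_nhds.congr' hev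
  · have hc : (ω : ℂ) * Complex.I ≠ 0 := by simp [Complex.ext_iff, h]
    have heq : ∀ T : ℝ, (∫ t in (0:ℝ)..T, Complex.exp (ω * t * Complex.I))
        = (Complex.exp ((ω * Complex.I) * T) - 1) / (ω * Complex.I) := by
      intro T
      rw [show (fun t : ℝ => Complex.exp (ω * t * Complex.I)) = fun t : ℝ => Complex.exp ((ω*Complex.I) * t) by funext t; ring_nf]
      rw [integral_exp_mul_complex hc]
      simp
    rw [if_neg h]
    have hg : Tendsto (fun T : ℝ => (2/‖(ω:ℂ)*Complex.I‖) * (1/T)) atTop (nhds 0) := by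
      rw [show (0:ℝ) = (2/‖(ω:ℂ)*Complex.I‖) * 0 by ring]
      exact (tendsto_inv_atTop_zero.congr (fun x => (one_div x).symm)).const_mul _
    apply squeeze_zero_norm' ?_ hg
    filter_upwards [eventually_gt_atTop (0:ℝ)] with T hT
    rw [heq T, norm_mul, norm_div]
    have h1 : ‖Complex.exp ((ω * Complex.I) * T) - 1‖ ≤ 2 := by
      calc ‖Complex.exp ((ω * Complex.I) * T) - 1‖
          ≤ ‖Complex.exp ((ω * Complex.I) * T)‖ + 1 := by
            simpa using norm_sub_le (Complex.exp ((ω * Complex.I) * T)) 1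
        _ ≤ 2 := by
            rw [show ((ω:ℂ) * Complex.I) * T = ((ω*T : ℝ):ℂ) * Complex.I by push_cast; ring]
            rw [Complex.norm_exp_ofReal_mul_I]; norm_num
    rw [norm_one, Complex.norm_real, Real.norm_of_nonneg hT.le, norm_div,
      mul_comm (2 / ‖(ω:ℂ)*Complex.I‖)]
    gcongr

lemma cos_expansion (m : ℕ) (φ : ℝ) :
    ((2*(1 + Real.cos φ) : ℝ) : ℂ)^m
      = ∑ j ∈ Finset.range (2*m+1), ((2*m).choose j : ℂ)
          * Complex.exp ((((j:ℤ) - (m:ℤ)) : ℤ) * φ * Complex.I) := by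
  have e1 : Complex.exp (-(↑φ*Complex.I)) * Complex.exp (↑φ*Complex.I) = 1 := by
    rw [← Complex.exp_add]; simp
  have base : ((2*(1 + Real.cos φ) : ℝ) : ℂ)
      = Complex.exp (-(φ * Complex.I)) * (1 + Complex.exp (φ * Complex.I))^2 := by
    have h2 := Complex.two_cos (φ : ℂ)
    rw [neg_mul] at h2
    push_cast
    linear_combination h2 - (2 + Complex.exp (↑φ*Complex.I)) * e1
  rw [base, mul_pow, ← Complex.exp_nat_mul, ← pow_mul, add_comm (1:ℂ), add_pow, Finset.mul_sum]
  apply Finset.sum_congr rfl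
  intro j hj
  rw [one_pow, mul_one, ← Complex.exp_nat_mul]
  have hexp : ((((j:ℤ) - (m:ℤ)) : ℤ) : ℂ) * φ * Complex.I
      = (j:ℂ)*(↑φ*Complex.I) + (m:ℂ) * -(↑φ*Complex.I) := by push_cast; ring
  rw [hexp, Complex.exp_add]
  ring

theorem kronecker_approx {ι : Type*} [Fintype ι] [DecidableEq ι] (v θv : ι → ℝ)
    (hv : ∀ c : ι → ℤ, ∑ i, (c i : ℝ) * v i = 0 → ∀ i, c i = 0)
    {δ : ℝ} (hδ : 0 < δ) :
    ∃ t : ℝ, ∀ i, ‖Complex.exp ((t * v i : ℝ) * Complex.I)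
      - Complex.exp ((θv i : ℝ) * Complex.I)‖ < δ := by
  by_cases hδ2 : δ ≤ 2
  swap
  · refine ⟨0, fun i => ?_⟩
    have h1 := norm_sub_le (Complex.exp ((0 * v i : ℝ) * Complex.I))
      (Complex.exp ((θv i : ℝ) * Complex.I))
    rw [Complex.norm_exp_ofReal_mul_I, Complex.norm_exp_ofReal_mul_I] at h1
    linarith [not_le.mp hδ2]
  by_contra hcon
  push_neg at hcon
  -- hcon : ∀ t, ∃ i, δ ≤ abs (...)
  set k := Fintype.card ι with hk
  set q : ℝ := 1 - δ^2/4 with hqdef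
  have hq0 : 0 ≤ q := by rw [hqdef]; nlinarith
  have hq1 : q < 1 := by rw [hqdef]; nlinarith
  -- choose m
  have htend : Tendsto (fun m : ℕ => ((2*(m:ℝ)+1))^k * q^m) atTop (nhds 0) := by
    apply squeeze_zero' (g := fun m : ℕ => (3:ℝ)^k * ((m:ℝ)^k * q^m))
    · filter_upwards with m
      positivity
    · filter_upwards [eventually_ge_atTop 1] with m hm
      have h1 : (2*(m:ℝ)+1) ≤ 3*(m:ℝ) := by
        have : (1:ℝ) ≤ (m:ℝ) := by exact_mod_cast hm
        linarith
      calc (2*(m:ℝ)+1)^k * q^m ≤ (3*(m:ℝ))^k * q^m := by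
            gcongr
        _ = (3:ℝ)^k * ((m:ℝ)^k * q^m) := by rw [mul_pow]; ring
    · simpa using (tendsto_pow_const_mul_const_pow_of_lt_one k hq0 hq1).const_mul ((3:ℝ)^k)
  obtain ⟨m, hmlt⟩ : ∃ m : ℕ, ((2*(m:ℝ)+1))^k * q^m < 1 :=
    ((htend.eventually (eventually_lt_nhds zero_lt_one))).exists
  -- the trigonometric product
  set F : ℝ → ℝ := fun t => ∏ i, (2*(1 + Real.cos (t * v i - θv i)))^m with hFdef
  have hfac_nonneg : ∀ (t : ℝ) (i : ι), (0:ℝ) ≤ 2*(1 + Real.cos (t * v i - θv i)) := by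
    intro t i
    nlinarith [Real.neg_one_le_cos (t * v i - θv i)]
  have hFnonneg : ∀ t, 0 ≤ F t := by
    intro t
    exact Finset.prod_nonneg fun i _ => pow_nonneg (hfac_nonneg t i) m
  have hFcont : Continuous F := by
    apply continuous_finset_prod
    intro i _
    exact ((continuous_const.mul (continuous_const.add
      (Real.continuous_cos.comp ((continuous_id.mul continuous_const).sub continuous_const)))).pow m)
  -- upper bound
  have hFle : ∀ t, F t ≤ (4:ℝ)^(m*k) * q^m := by
    intro t
    obtain ⟨i₀, hi₀⟩ := hcon t
    have hk1 : 1 ≤ k := by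
      rw [hk]
      exact Fintype.card_pos_iff.mpr ⟨i₀⟩
    have hcos : Real.cos (t * v i₀ - θv i₀) ≤ 1 - δ^2/2 := by
      have hns : Complex.normSq (Complex.exp ((t*v i₀ : ℝ) * Complex.I)
          - Complex.exp ((θv i₀:ℝ) * Complex.I)) = 2 - 2 * Real.cos (t*v i₀ - θv i₀) := by
        rw [Complex.normSq_sub]
        have hz : Complex.normSq (Complex.exp ((t*v i₀ : ℝ) * Complex.I)) = 1 := by
          rw [Complex.normSq_eq_norm_sq, Complex.norm_exp_ofReal_mul_I]; norm_num
        have hw : Complex.normSq (Complex.exp ((θv i₀ : ℝ) * Complex.I)) = 1 := by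
          rw [Complex.normSq_eq_norm_sq, Complex.norm_exp_ofReal_mul_I]; norm_num
        have hprod : Complex.exp ((t*v i₀ : ℝ) * Complex.I)
            * (starRingEnd ℂ) (Complex.exp ((θv i₀:ℝ) * Complex.I))
            = Complex.exp (((t*v i₀ - θv i₀ : ℝ)) * Complex.I) := by
          rw [← Complex.exp_conj, ← Complex.exp_add]
          congr 1
          rw [map_mul, Complex.conj_ofReal, Complex.conj_I]
          push_cast
          ring
        rw [hz, hw, hprod, Complex.exp_ofReal_mul_I_re]
        ring
      have habs : δ^2 ≤ Complex.normSq (Complex.exp ((t*v i₀ : ℝ) * Complex.I)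
          - Complex.exp ((θv i₀:ℝ) * Complex.I)) := by
        rw [Complex.normSq_eq_norm_sq]
        exact pow_le_pow_left₀ hδ.le hi₀ 2
      rw [hns] at habs
      linarith
    calc F t = (2*(1+Real.cos (t*v i₀ - θv i₀)))^m
          * ∏ i ∈ Finset.univ.erase i₀, (2*(1+Real.cos (t*v i - θv i)))^m :=
        (Finset.mul_prod_erase Finset.univ _ (Finset.mem_univ i₀)).symm
      _ ≤ (4*q)^m * ∏ i ∈ Finset.univ.erase i₀, (4:ℝ)^m := by
          apply mul_le_mul
          · apply pow_le_pow_left₀ (hfac_nonneg t i₀)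
            rw [hqdef]
            nlinarith
          · apply Finset.prod_le_prod (fun i _ => pow_nonneg (hfac_nonneg t i) m)
            intro i _
            apply pow_le_pow_left₀ (hfac_nonneg t i)
            nlinarith [Real.cos_le_one (t*v i - θv i)]
          · exact Finset.prod_nonneg fun i _ => pow_nonneg (hfac_nonneg t i) m
          · positivity
      _ = (4*q)^m * ((4:ℝ)^m)^(k-1) := by
          rw [Finset.prod_const, Finset.card_erase_of_mem (Finset.mem_univ i₀), Finset.card_univ]
      _ = (4:ℝ)^(m*k) * q^m := by
          have hmk : m * k = m + m*(k-1) := by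
            rw [add_comm, ← Nat.mul_succ]
            congr 1
            omega
          rw [mul_pow, ← pow_mul, hmk, pow_add]
          ring
  -- expansion and limit of averages
  have hlim : Tendsto (fun T : ℝ => (1/T) * ∫ t in (0:ℝ)..T, F t) atTop
      (nhds (((2*m).choose m : ℝ)^k)) := by
    classical
    set R := Fintype.piFinset (fun _ : ι => Finset.range (2*m+1)) with hR
    set ω : (ι → ℕ) → ℝ := fun r => ∑ i, (((r i : ℤ) - (m:ℤ)) : ℝ) * v i with hω
    set coeff : (ι → ℕ) → ℂ := fun r => (∏ i, ((2*m).choose (r i) : ℂ))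
      * Complex.exp (((-(∑ i, (((r i : ℤ) - (m:ℤ)) : ℝ) * θv i) : ℝ) : ℂ) * Complex.I) with hcoeff
    have hexpand : ∀ t : ℝ, ((F t : ℝ) : ℂ)
        = ∑ r ∈ R, coeff r * Complex.exp (((ω r : ℝ) : ℂ) * t * Complex.I) := by
      intro t
      have h1 : ((F t : ℝ) : ℂ) = ∏ i, ((2*(1 + Real.cos (t * v i - θv i)) : ℝ) : ℂ)^m := by
        rw [hFdef]
        push_cast
        rfl
      rw [h1]
      simp_rw [cos_expansion m]
      rw [Finset.prod_univ_sum]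
      apply Finset.sum_congr rfl
      intro r hr
      rw [Finset.prod_mul_distrib, ← Complex.exp_sum, hcoeff, hω]
      simp only []
      rw [mul_assoc, ← Complex.exp_add]
      congr 1
      push_cast
      rw [neg_mul, Finset.sum_mul, Finset.sum_mul, Finset.sum_mul, neg_add_eq_sub,
        ← Finset.sum_sub_distrib]
      congr 1
      exact Finset.sum_congr rfl fun i _ => by ring
    have hInt : ∀ (r : ι → ℕ) (T : ℝ), IntervalIntegrable
        (fun t : ℝ => Complex.exp (((ω r : ℝ) : ℂ) * t * Complex.I)) MeasureTheory.volume 0 T := by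
      intro r T
      apply Continuous.intervalIntegrable
      exact Complex.continuous_exp.comp ((continuous_const.mul Complex.continuous_ofReal).mul continuous_const)
    have hA : ∀ T : ℝ, (1/(T:ℂ)) * ∫ t in (0:ℝ)..T, ((F t : ℝ) : ℂ)
        = ∑ r ∈ R, coeff r * ((1/(T:ℂ)) * ∫ t in (0:ℝ)..T,
            Complex.exp (((ω r : ℝ) : ℂ) * t * Complex.I)) := by
      intro T
      rw [intervalIntegral.integral_congr (g := fun t : ℝ => ∑ r ∈ R, coeff r
        * Complex.exp (((ω r : ℝ) : ℂ) * t * Complex.I)) (fun t _ => hexpand t)]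
      rw [intervalIntegral.integral_finset_sum (fun r _ => ((hInt r T).const_mul (coeff r)))]
      rw [Finset.mul_sum]
      refine Finset.sum_congr rfl fun r _ => ?_
      rw [intervalIntegral.integral_const_mul]
      ring
    have hclim : Tendsto (fun T : ℝ => (1/(T:ℂ)) * ∫ t in (0:ℝ)..T, ((F t : ℝ) : ℂ)) atTop
        (nhds (∑ r ∈ R, coeff r * (if ω r = 0 then 1 else 0))) := by
      have h := tendsto_finset_sum R (fun r (_ : r ∈ R) => (avg_exp_tendsto (ω r)).const_mul (coeff r))
      refine Tendsto.congr (fun T => (hA T).symm) h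
    have hsum : ∑ r ∈ R, coeff r * (if ω r = 0 then 1 else 0) = (((2*m).choose m : ℂ))^k := by
      rw [Finset.sum_eq_single (fun _ : ι => m)]
      · have hω0 : ω (fun _ : ι => m) = 0 := by
          rw [hω]
          simp
        rw [if_pos hω0, mul_one, hcoeff]
        simp only [sub_self, Int.cast_zero, zero_mul, Finset.sum_const_zero, neg_zero,
          Complex.ofReal_zero, zero_mul, Complex.exp_zero, mul_one]
        rw [Finset.prod_const, Finset.card_univ]
      · intro r hr hne
        have hωne : ω r ≠ 0 := by
          intro h0
          apply hne
          funext i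
          have hz := hv (fun i => (r i : ℤ) - m) (by
            rw [hω] at h0
            convert h0 using 2
            push_cast
            ring) i
          omega
        rw [if_neg hωne, mul_zero]
      · intro hnotmem
        exfalso
        apply hnotmem
        rw [hR, Fintype.mem_piFinset]
        intro i
        rw [Finset.mem_range]
        omega
    rw [hsum] at hclim
    have h2 : Tendsto (fun T : ℝ => ((1/(T:ℂ)) * ∫ t in (0:ℝ)..T, ((F t : ℝ):ℂ)).re) atTop
        (nhds (((((2*m).choose m : ℂ))^k).re)) := (Complex.continuous_re.tendsto _).comp hclim
    have hval : (((((2*m).choose m : ℂ))^k).re) = ((2*m).choose m : ℝ)^k := by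
      rw [show (((2*m).choose m : ℕ) : ℂ) = ((((2*m).choose m : ℕ) : ℝ) : ℂ) by push_cast; rfl,
        ← Complex.ofReal_pow, Complex.ofReal_re]
    rw [hval] at h2
    apply h2.congr
    intro T
    rw [intervalIntegral.integral_ofReal]
    rw [show (1/(T:ℂ)) = (((1/T : ℝ)) : ℂ) by push_cast; rfl]
    rw [← Complex.ofReal_mul, Complex.ofReal_re]
  -- averages bounded
  have hbound : ∀ᶠ T : ℝ in atTop, (1/T) * (∫ t in (0:ℝ)..T, F t) ≤ (4:ℝ)^(m*k) * q^m := by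
    filter_upwards [eventually_gt_atTop (0:ℝ)] with T hT
    have hInt : IntervalIntegrable F MeasureTheory.volume 0 T := hFcont.intervalIntegrable 0 T
    have : (∫ t in (0:ℝ)..T, F t) ≤ (4:ℝ)^(m*k) * q^m * (T - 0) := by
      calc (∫ t in (0:ℝ)..T, F t) ≤ ∫ t in (0:ℝ)..T, (4:ℝ)^(m*k) * q^m := by
            apply intervalIntegral.integral_mono_on hT.le hInt (intervalIntegrable_const)
            intro x _
            exact hFle x
        _ = (4:ℝ)^(m*k) * q^m * (T - 0) := by rw [intervalIntegral.integral_const, smul_eq_mul]; ring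
    rw [one_div, inv_mul_le_iff₀ hT]
    linarith
  have hfinal : ((2*m).choose m : ℝ)^k ≤ (4:ℝ)^(m*k) * q^m := le_of_tendsto hlim hbound
  -- binomial lower bound
  have hbinom : (4:ℝ)^m ≤ (2*(m:ℝ)+1) * ((2*m).choose m : ℝ) := by
    have hnat : 4^m ≤ (2*m+1) * ((2*m).choose m) := by
      calc 4^m = 2^(2*m) := by rw [pow_mul]; norm_num
        _ = ∑ j ∈ Finset.range (2*m+1), (2*m).choose j := (Nat.sum_range_choose (2*m)).symm
        _ ≤ (2*m+1) * ((2*m).choose m) := by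
            have hmid : 2*m/2 = m := by omega
            have h := Finset.sum_le_card_nsmul (Finset.range (2*m+1))
              (fun j => (2*m).choose j) ((2*m).choose m)
              (fun j _ => by simpa [hmid] using Nat.choose_le_middle j (2*m))
            simpa [Finset.card_range, smul_eq_mul] using h
    exact_mod_cast hnat
  -- contradiction
  have hC0 : (0:ℝ) < ((2*m).choose m : ℝ) := by
    exact_mod_cast Nat.choose_pos (by omega)
  have h4 : (0:ℝ) < (4:ℝ)^(m*k) := by positivity
  have : (4:ℝ)^(m*k) ≤ (4:ℝ)^(m*k) * ((2*(m:ℝ)+1)^k * q^m) := by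
    calc (4:ℝ)^(m*k) = ((4:ℝ)^m)^k := by rw [pow_mul]
      _ ≤ ((2*(m:ℝ)+1) * ((2*m).choose m : ℝ))^k := by
          gcongr
      _ = (2*(m:ℝ)+1)^k * (((2*m).choose m : ℝ))^k := by rw [mul_pow]
      _ ≤ (2*(m:ℝ)+1)^k * ((4:ℝ)^(m*k) * q^m) := by
          gcongr
      _ = (4:ℝ)^(m*k) * ((2*(m:ℝ)+1)^k * q^m) := by ring
  nlinarith

lemma log_primes_indep {ι : Type*} [Fintype ι] [DecidableEq ι] (p : ι → ℕ)
    (hp : ∀ i, (p i).Prime) (hinj : Function.Injective p) (c : ι → ℤ)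
    (h : ∑ i, (c i : ℝ) * Real.log (p i) = 0) : ∀ i, c i = 0 := by
  set a : ι → ℕ := fun i => (c i).toNat with ha
  set b : ι → ℕ := fun i => (-(c i)).toNat with hb
  have hab : ∀ i, (c i : ℝ) = (a i : ℝ) - (b i : ℝ) := by
    intro i
    have h0 : ((c i).toNat : ℤ) - ((-(c i)).toNat : ℤ) = c i := by omega
    have h3 : (((c i).toNat : ℤ) : ℝ) - (((-(c i)).toNat : ℤ) : ℝ) = ((c i) : ℝ) := by
      exact_mod_cast congrArg (fun z : ℤ => (z : ℝ)) h0
    rw [ha, hb]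
    push_cast at h3 ⊢
    linarith
  have hsum : ∑ i, (a i : ℝ) * Real.log (p i) = ∑ i, (b i : ℝ) * Real.log (p i) := by
    have : ∑ i, ((a i : ℝ) - (b i : ℝ)) * Real.log (p i) = 0 := by
      rw [← h]
      exact Finset.sum_congr rfl fun i _ => by rw [hab i]
    rw [← sub_eq_zero, ← Finset.sum_sub_distrib]
    rw [← this]
    exact Finset.sum_congr rfl fun i _ => by ring
  set A : ℕ := ∏ i, (p i)^(a i) with hA
  set B : ℕ := ∏ i, (p i)^(b i) with hB
  have hppos : ∀ i, (0:ℝ) < (p i : ℝ) := fun i => by exact_mod_cast (hp i).pos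
  have hlogA : Real.log (A : ℝ) = ∑ i, (a i : ℝ) * Real.log (p i) := by
    rw [hA]
    push_cast
    rw [Real.log_prod (fun i _ => ne_of_gt (pow_pos (hppos i) _))]
    exact Finset.sum_congr rfl fun i _ => by rw [Real.log_pow]
  have hlogB : Real.log (B : ℝ) = ∑ i, (b i : ℝ) * Real.log (p i) := by
    rw [hB]
    push_cast
    rw [Real.log_prod (fun i _ => ne_of_gt (pow_pos (hppos i) _))]
    exact Finset.sum_congr rfl fun i _ => by rw [Real.log_pow]
  have hApos : 0 < A := Finset.prod_pos fun i _ => pow_pos (hp i).pos _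
  have hBpos : 0 < B := Finset.prod_pos fun i _ => pow_pos (hp i).pos _
  have hAB : A = B := by
    have : Real.log (A:ℝ) = Real.log (B:ℝ) := by rw [hlogA, hlogB, hsum]
    have hAB' : (A:ℝ) = (B:ℝ) := Real.log_injOn_pos
      (Set.mem_Ioi.mpr (by exact_mod_cast hApos))
      (Set.mem_Ioi.mpr (by exact_mod_cast hBpos)) this
    exact_mod_cast hAB'
  have hfact : ∀ i, a i = b i := by
    intro i
    have hAf : A.factorization (p i) = a i := by
      rw [hA, Nat.factorization_prod (fun j _ => pow_ne_zero _ (hp j).pos.ne')]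
      rw [Finset.sum_apply']
      rw [Finset.sum_eq_single i]
      · rw [(hp i).factorization_pow, Finsupp.single_apply, if_pos rfl]
      · intro j _ hji
        rw [(hp j).factorization_pow, Finsupp.single_apply,
          if_neg (fun hh => hji (hinj hh))]
      · intro hni
        exact absurd (Finset.mem_univ i) hni
    have hBf : B.factorization (p i) = b i := by
      rw [hB, Nat.factorization_prod (fun j _ => pow_ne_zero _ (hp j).pos.ne')]
      rw [Finset.sum_apply']
      rw [Finset.sum_eq_single i]
      · rw [(hp i).factorization_pow, Finsupp.single_apply, if_pos rfl]
      · intro j _ hji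
        rw [(hp j).factorization_pow, Finsupp.single_apply,
          if_neg (fun hh => hji (hinj hh))]
      · intro hni
        exact absurd (Finset.mem_univ i) hni
    rw [← hAf, ← hBf, hAB]
  intro i
  have h5 := hfact i
  simp only [ha, hb] at h5
  omega

lemma abs_cpow_neg_I_mul (n : ℕ) (hn : 1 ≤ n) (t : ℝ) :
    ‖(n:ℂ) ^ (-(Complex.I * t))‖ = 1 := by
  have hpos : (0:ℝ) < (n:ℝ) := by exact_mod_cast hn
  rw [show ((n:ℂ)) = (((n:ℝ)):ℂ) by push_cast; rfl]
  rw [Complex.norm_cpow_eq_rpow_re_of_pos hpos]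
  have : (-(Complex.I * (t:ℂ))).re = 0 := by simp
  rw [this, Real.rpow_zero]

lemma chi_close (χ : ℕ → ℂ) (hχ1 : χ 1 = 1)
    (hχmul : ∀ m n : ℕ, 1 ≤ m → 1 ≤ n → χ (m * n) = χ m * χ n)
    (hχabs : ∀ n : ℕ, 1 ≤ n → ‖χ n‖ = 1)
    (t η : ℝ) (hη : 0 ≤ η) (N : ℕ)
    (hp : ∀ p : ℕ, p.Prime → p ≤ N → ‖(p:ℂ)^(-(Complex.I * t)) - χ p‖ ≤ η) :
    ∀ n : ℕ, 1 ≤ n → n ≤ N → ‖(n:ℂ)^(-(Complex.I * t)) - χ n‖ ≤ n * η := by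
  intro n
  induction n using Nat.strong_induction_on with
  | _ n ih =>
    intro h1 hN
    rcases eq_or_lt_of_le h1 with h1' | h2
    · rw [← h1', Nat.cast_one, Complex.one_cpow, hχ1, sub_self]
      simpa using hη
    · -- n ≥ 2
      have hn2 : 2 ≤ n := h2
      set p := n.minFac with hpdef
      have hprime : p.Prime := Nat.minFac_prime (by omega)
      have hdvd : p ∣ n := Nat.minFac_dvd n
      set m := n / p with hmdef
      have hnm : n = p * m := (Nat.mul_div_cancel' hdvd).symm
      have hm1 : 1 ≤ m := Nat.one_le_div_iff hprime.pos |>.mpr (Nat.minFac_le (by omega))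
      have hp2 : 2 ≤ p := hprime.two_le
      have hmlt : m < n := by
        rw [hnm]
        calc m < 2 * m := by omega
          _ ≤ p * m := by
              apply Nat.mul_le_mul_right
              exact hp2
      have hmN : m ≤ N := le_trans (le_of_lt hmlt) hN
      have hpN : p ≤ N := le_trans (Nat.minFac_le (by omega)) hN
      have ihm := ih m hmlt hm1 hmN
      have hpp := hp p hprime hpN
      -- cpow multiplicativity
      have hsplit : ((n:ℂ))^(-(Complex.I * t)) = ((p:ℂ))^(-(Complex.I * t)) * ((m:ℂ))^(-(Complex.I * t)) := by
        rw [hnm]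
        rw [show (((p * m : ℕ)):ℂ) = (((p:ℝ)):ℂ) * (((m:ℝ)):ℂ) by push_cast; rfl]
        rw [Complex.mul_cpow_ofReal_nonneg (by positivity) (by positivity)]
        norm_num
      have hχsplit : χ n = χ p * χ m := by rw [hnm]; exact hχmul p m (by omega) hm1
      have habs_p : ‖(p:ℂ)^(-(Complex.I * t))‖ = 1 := abs_cpow_neg_I_mul p (by omega) t
      have habs_χm : ‖χ m‖ = 1 := hχabs m hm1
      calc ‖(n:ℂ)^(-(Complex.I * t)) - χ n‖
          = ‖((p:ℂ))^(-(Complex.I * t)) * (((m:ℂ))^(-(Complex.I * t)) - χ m)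
            + (((p:ℂ))^(-(Complex.I * t)) - χ p) * χ m‖ := by
            rw [hsplit, hχsplit]
            congr 1
            ring
        _ ≤ ‖((p:ℂ))^(-(Complex.I * t)) * (((m:ℂ))^(-(Complex.I * t)) - χ m)‖
            + ‖(((p:ℂ))^(-(Complex.I * t)) - χ p) * χ m‖ := norm_add_le _ _
        _ = ‖((m:ℂ))^(-(Complex.I * t)) - χ m‖
            + ‖((p:ℂ))^(-(Complex.I * t)) - χ p‖ := by
            rw [norm_mul, norm_mul, habs_p, habs_χm, one_mul, mul_one]
        _ ≤ m * η + η := add_le_add ihm hpp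
        _ ≤ n * η := by
            have : (m:ℝ) + 1 ≤ (n:ℝ) := by
              have : m + 1 ≤ n := by omega
              exact_mod_cast this
            nlinarith

/-- Twisting by a completely multiplicative unimodular `χ` preserves the
abscissa of uniform convergence: if the partial sums of `∑ a(n) n^{-s}` converge
uniformly on `{Re s ≥ θ + ε}` for every `ε > 0`, so do those of `∑ a(n) χ(n) n^{-s}`. -/
theorem twist_preserves_uniform_convergence
    (a χ : ℕ → ℂ)
    (hχ1 : χ 1 = 1)
    (hχmul : ∀ m n : ℕ, 1 ≤ m → 1 ≤ n → χ (m * n) = χ m * χ n)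
    (hχabs : ∀ n : ℕ, 1 ≤ n → ‖χ n‖ = 1)
    (θ : ℝ)
    (hunif : ∀ ε > (0 : ℝ), ∃ g : ℂ → ℂ,
      TendstoUniformlyOn (fun (N : ℕ) (s : ℂ) => ∑ n ∈ Finset.Icc 1 N, a n * (n : ℂ) ^ (-s))
        g atTop {s : ℂ | θ + ε ≤ s.re}) :
    ∀ ε > (0 : ℝ), ∃ g : ℂ → ℂ,
      TendstoUniformlyOn
        (fun (N : ℕ) (s : ℂ) => ∑ n ∈ Finset.Icc 1 N, a n * χ n * (n : ℂ) ^ (-s))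
        g atTop {s : ℂ | θ + ε ≤ s.re} := by
  intro ε hε
  obtain ⟨g, hg⟩ := hunif ε hε
  have hC := hg.uniformCauchySeqOn
  rw [Metric.uniformCauchySeqOn_iff] at hC
  have key : UniformCauchySeqOn
      (fun (N : ℕ) (s : ℂ) => ∑ n ∈ Finset.Icc 1 N, a n * χ n * (n : ℂ) ^ (-s))
      atTop {s : ℂ | θ + ε ≤ s.re} := by
    rw [Metric.uniformCauchySeqOn_iff]
    intro δ hδ
    obtain ⟨M₀, hM₀⟩ := hC (δ/2) (by linarith)
    have main : ∀ M N : ℕ, M₀ ≤ M → M₀ ≤ N → M ≤ N → ∀ s ∈ {s : ℂ | θ + ε ≤ s.re},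
        dist (∑ n ∈ Finset.Icc 1 M, a n * χ n * (n : ℂ) ^ (-s))
          (∑ n ∈ Finset.Icc 1 N, a n * χ n * (n : ℂ) ^ (-s)) < δ := by
      intro M N hM hN hMN s hs
      classical
      have hsre : θ + ε ≤ s.re := hs
      have hsub : Finset.Icc 1 M ⊆ Finset.Icc 1 N := Finset.Icc_subset_Icc_right hMN
      have hdiff : Finset.Icc 1 N \ Finset.Icc 1 M = Finset.Icc (M+1) N := by
        ext x
        simp only [Finset.mem_sdiff, Finset.mem_Icc, not_and, not_le]
        omega
      set C : ℝ := ∑ n ∈ Finset.Icc (M+1) N, ‖a n‖ * (n:ℝ) * (n:ℝ)^(-(θ+ε)) with hCdef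
      have hC0 : 0 ≤ C := Finset.sum_nonneg fun n _ => by positivity
      set η : ℝ := δ/(2*(C+1)) with hηdef
      have hη : 0 < η := by rw [hηdef]; positivity
      set P := Finset.filter Nat.Prime (Finset.range (N+1)) with hP
      have hv : ∀ c : {x // x ∈ P} → ℤ,
          ∑ i, (c i : ℝ) * (-Real.log ((i : ℕ))) = 0 → ∀ i, c i = 0 := by
        intro c hc
        have h0 : ∑ i, (c i : ℝ) * Real.log ((i:ℕ)) = 0 := by
          have heq : ∑ i, (c i : ℝ) * Real.log ((i:ℕ))
              = -∑ i, (c i : ℝ) * (-Real.log ((i:ℕ))) := by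
            rw [← Finset.sum_neg_distrib]
            exact Finset.sum_congr rfl fun i _ => by ring
          rw [heq, hc, neg_zero]
        have h' : ∑ i, ((-(c i) : ℤ) : ℝ) * Real.log ((i:ℕ)) = 0 := by
          have heq : ∑ i, ((-(c i) : ℤ) : ℝ) * Real.log ((i:ℕ))
              = -∑ i, (c i : ℝ) * Real.log ((i:ℕ)) := by
            rw [← Finset.sum_neg_distrib]
            refine Finset.sum_congr rfl fun i _ => ?_
            push_cast
            ring
          rw [heq, h0, neg_zero]
        have hz := log_primes_indep (fun i : {x // x ∈ P} => (i : ℕ))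
          (fun i => (Finset.mem_filter.mp i.2).2) Subtype.coe_injective
          (fun i => -(c i)) h'
        intro i
        have h6 : -(c i) = 0 := hz i
        omega
      obtain ⟨t, ht⟩ := kronecker_approx (fun p : {x // x ∈ P} => -Real.log ((p : ℕ)))
        (fun p => (χ ((p : ℕ))).arg) hv hη
      have hprime_approx : ∀ p : ℕ, p.Prime → p ≤ N →
          ‖(p:ℂ)^(-(Complex.I * t)) - χ p‖ ≤ η := by
        intro p hpp hpN
        have hmem : p ∈ P := by
          rw [hP, Finset.mem_filter, Finset.mem_range]
          exact ⟨by omega, hpp⟩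
        have h := ht ⟨p, hmem⟩
        have he1 : Complex.exp (((t * -Real.log p : ℝ)) * Complex.I)
            = (p:ℂ)^(-(Complex.I * t)) := by
          rw [Complex.cpow_def_of_ne_zero (by exact_mod_cast hpp.pos.ne' : (p:ℂ) ≠ 0)]
          have hlogp : Complex.log ((p:ℕ):ℂ) = ((Real.log (p:ℝ)) : ℂ) := by
            rw [show (((p:ℕ)):ℂ) = (((p:ℝ)):ℂ) by push_cast; rfl]
            exact (Complex.ofReal_log (by positivity)).symm
          rw [hlogp]
          congr 1
          push_cast
          ring
        have he2 : Complex.exp ((((χ p).arg : ℝ)) * Complex.I) = χ p := by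
          have h3 := Complex.norm_mul_exp_arg_mul_I (χ p)
          rw [hχabs p hpp.one_lt.le] at h3
          simpa using h3
        rw [he1, he2] at h
        exact h.le
      have hclose := chi_close χ hχ1 hχmul hχabs t η hη.le N hprime_approx
      set s' : ℂ := s + Complex.I * t with hs'def
      have hs' : s' ∈ {s : ℂ | θ + ε ≤ s.re} := by
        show θ + ε ≤ s'.re
        rw [hs'def]
        simp [Complex.add_re, Complex.mul_re]
        exact hsre
      have htail_orig : (∑ n ∈ Finset.Icc 1 N, a n * (n:ℂ)^(-s'))
          - (∑ n ∈ Finset.Icc 1 M, a n * (n:ℂ)^(-s'))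
          = ∑ n ∈ Finset.Icc (M+1) N, a n * (n:ℂ)^(-s') := by
        rw [← Finset.sum_sdiff_eq_sub hsub, hdiff]
      have htail_twist : (∑ n ∈ Finset.Icc 1 N, a n * χ n * (n:ℂ)^(-s))
          - (∑ n ∈ Finset.Icc 1 M, a n * χ n * (n:ℂ)^(-s))
          = ∑ n ∈ Finset.Icc (M+1) N, a n * χ n * (n:ℂ)^(-s) := by
        rw [← Finset.sum_sdiff_eq_sub hsub, hdiff]
      have hcpow_split : ∀ n ∈ Finset.Icc (M+1) N,
          (n:ℂ)^(-s') = (n:ℂ)^(-s) * (n:ℂ)^(-(Complex.I * t)) := by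
        intro n hn
        obtain ⟨hn1, hnN⟩ := Finset.mem_Icc.mp hn
        have hne : (n:ℂ) ≠ 0 := by
          have : 1 ≤ n := by omega
          exact_mod_cast Nat.one_le_iff_ne_zero.mp this
        rw [← Complex.cpow_add _ _ hne]
        congr 1
        rw [hs'def]
        ring
      rw [dist_eq_norm, norm_sub_rev, htail_twist]
      have hηC : η * C ≤ δ/2 := by
        rw [hηdef, div_mul_eq_mul_div, div_le_div_iff₀ (by positivity) two_pos]
        nlinarith
      calc ‖∑ n ∈ Finset.Icc (M+1) N, a n * χ n * (n:ℂ)^(-s)‖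
          = ‖(∑ n ∈ Finset.Icc (M+1) N, a n * (n:ℂ)^(-s'))
              + ∑ n ∈ Finset.Icc (M+1) N, a n * (χ n - (n:ℂ)^(-(Complex.I*t))) * (n:ℂ)^(-s)‖ := by
            congr 1
            rw [← Finset.sum_add_distrib]
            refine Finset.sum_congr rfl fun n hn => ?_
            rw [hcpow_split n hn]
            ring
        _ ≤ ‖∑ n ∈ Finset.Icc (M+1) N, a n * (n:ℂ)^(-s')‖
              + ‖∑ n ∈ Finset.Icc (M+1) N, a n * (χ n - (n:ℂ)^(-(Complex.I*t))) * (n:ℂ)^(-s)‖ :=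
            norm_add_le _ _
        _ < δ/2 + δ/2 := by
            apply add_lt_add_of_lt_of_le
            · rw [← htail_orig]
              have h4 := hM₀ N hN M hM s' hs'
              rwa [dist_eq_norm] at h4
            · calc ‖∑ n ∈ Finset.Icc (M+1) N, a n * (χ n - (n:ℂ)^(-(Complex.I*t))) * (n:ℂ)^(-s)‖
                  ≤ ∑ n ∈ Finset.Icc (M+1) N, ‖a n * (χ n - (n:ℂ)^(-(Complex.I*t))) * (n:ℂ)^(-s)‖ :=
                  norm_sum_le _ _
                _ ≤ ∑ n ∈ Finset.Icc (M+1) N, ‖a n‖ * ((n:ℝ) * η) * (n:ℝ)^(-(θ+ε)) := by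
                    apply Finset.sum_le_sum
                    intro n hn
                    obtain ⟨hn1, hnN⟩ := Finset.mem_Icc.mp hn
                    have hn1' : 1 ≤ n := by omega
                    have hnpos : (0:ℝ) < (n:ℝ) := by exact_mod_cast hn1'
                    rw [norm_mul, norm_mul]
                    have hb1 : ‖χ n - (n:ℂ)^(-(Complex.I*t))‖ ≤ (n:ℝ) * η := by
                      rw [norm_sub_rev]
                      exact hclose n hn1' hnN
                    have hb2 : ‖(n:ℂ)^(-s)‖ ≤ (n:ℝ)^(-(θ+ε)) := by
                      rw [show ((n:ℕ):ℂ) = (((n:ℝ)):ℂ) by push_cast; rfl,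
                        Complex.norm_cpow_eq_rpow_re_of_pos hnpos]
                      apply Real.rpow_le_rpow_of_exponent_le (by exact_mod_cast hn1')
                      rw [Complex.neg_re]
                      linarith
                    gcongr
                _ = η * C := by
                    rw [hCdef, Finset.mul_sum]
                    exact Finset.sum_congr rfl fun n _ => by ring
                _ ≤ δ/2 := hηC
        _ = δ := by ring
    refine ⟨M₀, fun M hM N hN s hs => ?_⟩
    rcases le_total M N with h | h
    · exact main M N hM hN h s hs
    · rw [dist_comm]
      exact main N M hN hM h s hs
  refine ⟨fun s => limUnder atTop (fun N => ∑ n ∈ Finset.Icc 1 N, a n * χ n * (n : ℂ) ^ (-s)), ?_⟩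
  apply key.tendstoUniformlyOn_of_tendsto
  intro s hs
  exact (key.cauchySeq hs).tendsto_limUnder
end

section
/- Let a : ℕ → ℂ, let χ : ℕ → ℂ be completely multiplicative with |χ(n)| = 1 for every n ≥ 1, and let θ ∈ ℝ. Suppose the partial sums of f(s) = ∑_{n≥1} a(n) n^{-s} converge uniformly on {s : Re s > θ} (so both f and the twisted sum f_χ(s) = ∑_{n≥1} a(n) χ(n) n^{-s} define analytic functions on ℂ_θ = {s : Re s > θ}). Then the image sets coincide: {f_χ(s) : Re s > θ} = {f(s) : Re s > θ}. -/
set_option maxHeartbeats 1000000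

open Filter Topology

namespace TwistAux
open Complex Finset
noncomputable def E (n : ℕ) (t : ℝ) : ℂ := Complex.exp (-(Complex.I * t) * Real.log n)

lemma E_eq (n : ℕ) (t : ℝ) : E n t = Complex.exp (((-(t * Real.log n) : ℝ) : ℂ) * Complex.I) := by
  rw [E]; congr 1; push_cast; ring

lemma E_norm (n : ℕ) (t : ℝ) : ‖E n t‖ = 1 := by
  rw [E_eq, Complex.norm_exp_ofReal_mul_I]

lemma E_one (t : ℝ) : E 1 t = 1 := by simp [E]

lemma E_mul {m n : ℕ} (hm : 1 ≤ m) (hn : 1 ≤ n) (t : ℝ) :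
    E (m * n) t = E m t * E n t := by
  rw [E, E, E, ← Complex.exp_add, ← mul_add]
  push_cast
  rw [Real.log_mul (by positivity) (by positivity)]
  push_cast
  ring_nf

lemma E_pow (n r : ℕ) (t : ℝ) : E (n ^ r) t = (E n t) ^ r := by
  rw [E, E, ← Complex.exp_nat_mul]
  push_cast
  rw [Real.log_pow]
  push_cast
  ring_nf

lemma E_cont (n : ℕ) : Continuous (fun t => E n t) := by
  unfold E; fun_prop

lemma Emulconj (μ ν : ℕ) (t : ℝ) :
    E μ t * (starRingEnd ℂ) (E ν t) =
      Complex.exp ((Complex.I * ((Real.log ν : ℝ) - (Real.log μ : ℝ))) * t) := by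
  rw [E, E, ← Complex.exp_conj, ← Complex.exp_add]
  congr 1
  simp only [map_mul, map_neg, Complex.conj_I, Complex.conj_ofReal]
  push_cast
  ring

lemma integral_diag (μ : ℕ) (T : ℝ) :
    ∫ t in (0:ℝ)..T, E μ t * (starRingEnd ℂ) (E μ t) = (T : ℂ) := by
  have h : ∀ t : ℝ, E μ t * (starRingEnd ℂ) (E μ t) = 1 := by
    intro t
    rw [Complex.mul_conj]
    norm_cast
    rw [Complex.normSq_eq_norm_sq, E_norm]
    norm_num
  simp only [h]
  simp

lemma integral_offdiag {μ ν : ℕ} (hμ : 1 ≤ μ) (hν : 1 ≤ ν) (hne : μ ≠ ν) (T : ℝ) :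
    ‖∫ t in (0:ℝ)..T, E μ t * (starRingEnd ℂ) (E ν t)‖ ≤
      2 / |Real.log ν - Real.log μ| := by
  have hd : (Real.log ν - Real.log μ) ≠ 0 := by
    intro h
    have := Real.log_injOn_pos (Set.mem_Ioi.mpr (by positivity : (0:ℝ) < (ν:ℝ)))
      (Set.mem_Ioi.mpr (by positivity : (0:ℝ) < (μ:ℝ))) (by linarith)
    exact hne (by exact_mod_cast this.symm)
  have hc : Complex.I * ((Real.log ν : ℝ) - (Real.log μ : ℝ)) ≠ 0 := by
    simp only [ne_eq, mul_eq_zero, Complex.I_ne_zero, false_or]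
    exact_mod_cast hd
  have h1 : ∀ x : ℝ, ‖Complex.exp (Complex.I * ((Real.log ν : ℝ) - (Real.log μ : ℝ)) * x)‖ = 1 := by
    intro x
    have hx : Complex.I * ((Real.log ν : ℝ) - (Real.log μ : ℝ)) * x
        = ((((Real.log ν - Real.log μ) * x : ℝ)) : ℂ) * Complex.I := by push_cast; ring
    rw [hx, Complex.norm_exp_ofReal_mul_I]
  simp only [Emulconj]
  rw [integral_exp_mul_complex hc, norm_div]
  have h2 : ‖Complex.exp (Complex.I * ((Real.log ν : ℝ) - (Real.log μ : ℝ)) * T) -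
      Complex.exp (Complex.I * ((Real.log ν : ℝ) - (Real.log μ : ℝ)) * 0)‖ ≤ 2 := by
    refine (norm_sub_le _ _).trans ?_
    rw [h1 T, mul_zero, Complex.exp_zero]
    norm_num
  have h3 : ‖Complex.I * ((Real.log ν : ℝ) - (Real.log μ : ℝ))‖ = |Real.log ν - Real.log μ| := by
    rw [norm_mul, Complex.norm_I, one_mul, ← Complex.ofReal_sub, Complex.norm_real, Real.norm_eq_abs]
  rw [h3]
  gcongr
  exact h2

section Kron

variable {m : ℕ} (p : Fin m → ℕ)

noncomputable def Nval (α : Fin m → ℕ) : ℕ := ∏ j, p j ^ α j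

lemma Nval_pos (hp : ∀ j, (p j).Prime) (α : Fin m → ℕ) : 1 ≤ Nval p α :=
  Nat.one_le_iff_ne_zero.mpr (Finset.prod_ne_zero_iff.mpr
    fun j _ => pow_ne_zero _ (hp j).pos.ne')

lemma Nval_factorization (hp : ∀ j, (p j).Prime) (hinj : Function.Injective p)
    (α : Fin m → ℕ) (i : Fin m) : (Nval p α).factorization (p i) = α i := by
  rw [Nval, Nat.factorization_prod (fun j _ => pow_ne_zero _ (hp j).pos.ne')]
  rw [Finset.sum_apply']
  rw [Finset.sum_eq_single i]
  · rw [(hp i).factorization_pow, Finsupp.single_apply, if_pos rfl]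
  · intro j _ hji
    rw [(hp j).factorization_pow, Finsupp.single_apply, if_neg (fun h => hji (hinj h))]
  · intro h; exact absurd (Finset.mem_univ i) h

lemma Nval_inj (hp : ∀ j, (p j).Prime) (hinj : Function.Injective p) :
    Function.Injective (Nval p) := by
  intro α β h
  funext i
  rw [← Nval_factorization p hp hinj α i, ← Nval_factorization p hp hinj β i, h]

lemma E_prod (s : Finset (Fin m)) (g : Fin m → ℕ) (hg : ∀ j, 1 ≤ g j) (t : ℝ) :
    E (∏ j ∈ s, g j) t = ∏ j ∈ s, E (g j) t := by
  induction s using Finset.cons_induction with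
  | empty => simp [E_one]
  | cons j s hj ih =>
      rw [Finset.prod_cons, Finset.prod_cons, E_mul (hg j) ?h t, ih]
      exact Finset.one_le_prod' fun i _ => hg i

lemma E_Nval (hp : ∀ j, (p j).Prime) (α : Fin m → ℕ) (t : ℝ) :
    E (Nval p α) t = ∏ j, (E (p j) t) ^ (α j) := by
  rw [Nval, E_prod Finset.univ _ (fun j => Nat.one_le_iff_ne_zero.mpr
    (pow_ne_zero _ (hp j).pos.ne')) t]
  exact Finset.prod_congr rfl fun j _ => E_pow _ _ _

theorem kron_prime (hp : ∀ j, (p j).Prime)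
    (hinj : Function.Injective p) (w : Fin m → ℂ) (hw : ∀ j, ‖w j‖ = 1)
    {ε : ℝ} (hε : 0 < ε) (hε2 : ε ≤ 2) :
    ∃ t : ℝ, ∀ j, ‖E (p j) t - w j‖ < ε := by
  set η : ℝ := ε ^ 2 / 8 with hηdef
  have hη : 0 < η := by positivity
  have hη2 : η ≤ 1 / 2 := by rw [hηdef]; nlinarith
  -- pick k
  obtain ⟨k, hk⟩ : ∃ k : ℕ, ((k : ℝ) + 1) ^ m * ((1 - η) ^ 2) ^ k < 1 := by
    have hη1 : η < 1 := by linarith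
    have hr0 : (0:ℝ) < (1 - η) ^ 2 := by nlinarith
    have hr1 : (1 - η) ^ 2 < 1 := by nlinarith
    have hs : Tendsto (fun n : ℕ => (n : ℝ) ^ m * ((1 - η) ^ 2) ^ n) atTop (𝓝 0) :=
      (summable_pow_mul_geometric_of_norm_lt_one (R := ℝ) m
        (by rw [Real.norm_eq_abs, abs_of_pos hr0]; exact hr1)).tendsto_atTop_zero
    have hs2 : Tendsto (fun n : ℕ =>
        ((1 - η) ^ 2)⁻¹ * (((n + 1 : ℕ) : ℝ) ^ m * ((1 - η) ^ 2) ^ (n + 1)))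
        atTop (𝓝 (((1 - η) ^ 2)⁻¹ * 0)) :=
      ((hs.comp (tendsto_add_atTop_nat 1)).const_mul _)
    rw [mul_zero] at hs2
    have heq : ∀ n : ℕ, ((n : ℝ) + 1) ^ m * ((1 - η) ^ 2) ^ n
        = ((1 - η) ^ 2)⁻¹ * (((n + 1 : ℕ) : ℝ) ^ m * ((1 - η) ^ 2) ^ (n + 1)) := by
      intro n
      push_cast
      rw [pow_succ ((1 - η) ^ 2) n]
      field_simp [(sub_pos.mpr hη1).ne']
    have hs3 : Tendsto (fun n : ℕ => ((n : ℝ) + 1) ^ m * ((1 - η) ^ 2) ^ n) atTop (𝓝 0) := by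
      simpa only [← heq] using hs2
    exact (hs3.eventually_lt_const one_pos).exists
  -- definitions
  set A : Finset (Fin m → ℕ) := Fintype.piFinset (fun _ => Finset.range (k + 1)) with hAdef
  set c : (Fin m → ℕ) → ℂ :=
    fun α => ∏ j, ((2 : ℂ)⁻¹ ^ k * (Nat.choose k (α j) : ℂ) * ((starRingEnd ℂ) (w j)) ^ (α j))
    with hcdef
  set ρ : (Fin m → ℕ) → ℝ := fun α => ∏ j, ((2 : ℝ)⁻¹ ^ k * (Nat.choose k (α j) : ℝ))
    with hρdef
  set G : ℝ → ℂ :=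
    fun t => ∏ j, ((1 + (starRingEnd ℂ) (w j) * E (p j) t) / 2) ^ k with hGdef
  have hρ0 : ∀ α, 0 ≤ ρ α := fun α => Finset.prod_nonneg fun j _ => by positivity
  have hρc : ∀ α, ‖c α‖ = ρ α := by
    intro α
    rw [hcdef, hρdef]
    rw [norm_prod]
    refine Finset.prod_congr rfl fun j _ => ?_
    rw [norm_mul, norm_mul, norm_pow, norm_pow, RCLike.norm_conj, hw j, one_pow, mul_one,
      norm_inv]
    norm_num
  have hGexp : ∀ t, G t = ∑ α ∈ A, c α * E (Nval p α) t := by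
    intro t
    have hfj : ∀ j, ((1 + (starRingEnd ℂ) (w j) * E (p j) t) / 2) ^ k
        = ∑ r ∈ Finset.range (k + 1),
          ((2 : ℂ)⁻¹ ^ k * (Nat.choose k r : ℂ) * ((starRingEnd ℂ) (w j)) ^ r
            * (E (p j) t) ^ r) := by
      intro j
      rw [div_pow, add_comm, add_pow, Finset.sum_div]
      refine Finset.sum_congr rfl fun r _ => ?_
      rw [one_pow, mul_one, mul_pow]
      rw [div_eq_mul_inv, ← inv_pow]
      ring
    rw [hGdef]
    simp only [hfj]
    rw [Finset.prod_univ_sum]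
    refine Finset.sum_congr rfl fun α hα => ?_
    rw [E_Nval p hp α t, hcdef, ← Finset.prod_mul_distrib]
  -- lower bound for the diagonal sum
  set Aval : ℝ := ∑ α ∈ A, ρ α ^ 2 with hAvaldef
  have hAval : ((k : ℝ) + 1)⁻¹ ^ m ≤ Aval := by
    have hfac : Aval = ∏ j : Fin m, ∑ r ∈ Finset.range (k + 1),
        ((2 : ℝ)⁻¹ ^ k * (Nat.choose k r : ℝ)) ^ 2 := by
      rw [hAvaldef, Finset.prod_univ_sum]
      refine Finset.sum_congr rfl fun α _ => ?_
      rw [hρdef, ← Finset.prod_pow]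
    have hone : (∑ r ∈ Finset.range (k + 1), ((2 : ℝ)⁻¹ ^ k * (Nat.choose k r : ℝ))) = 1 := by
      rw [← Finset.mul_sum]
      have hcast : (∑ r ∈ Finset.range (k + 1), (Nat.choose k r : ℝ)) = 2 ^ k := by
        rw [← Nat.cast_sum, Nat.sum_range_choose]
        push_cast; ring
      rw [hcast, inv_pow, inv_mul_cancel₀ (by positivity)]
    have hj : ∀ j : Fin m, ((k : ℝ) + 1)⁻¹ ≤ ∑ r ∈ Finset.range (k + 1),
        ((2 : ℝ)⁻¹ ^ k * (Nat.choose k r : ℝ)) ^ 2 := by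
      intro j
      have hCS := sq_sum_le_card_mul_sum_sq
        (s := Finset.range (k + 1)) (f := fun r => (2 : ℝ)⁻¹ ^ k * (Nat.choose k r : ℝ))
      rw [hone, Finset.card_range, one_pow] at hCS
      have hpos : (0:ℝ) < (k : ℝ) + 1 := by positivity
      rw [← one_div, div_le_iff₀ hpos]
      have : ((k:ℝ) + 1) = ((k + 1 : ℕ) : ℝ) := by push_cast; ring
      nlinarith [hCS]
    rw [hfac]
    calc ((k : ℝ) + 1)⁻¹ ^ m = ∏ _j : Fin m, ((k : ℝ) + 1)⁻¹ := by
          rw [Finset.prod_const, Finset.card_univ, Fintype.card_fin]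
      _ ≤ _ := Finset.prod_le_prod (fun j _ => by positivity) (fun j _ => hj j)
  set B : ℝ := ((1 - η) ^ k) ^ 2 with hBdef
  have hBA : B < Aval := by
    have h1 : (0:ℝ) < ((k:ℝ) + 1) ^ m := by positivity
    have h2 : B = ((1 - η) ^ 2) ^ k := by rw [hBdef, ← pow_mul, ← pow_mul, Nat.mul_comm]
    have h3 : ((1 - η) ^ 2) ^ k < ((k : ℝ) + 1)⁻¹ ^ m := by
      rw [inv_pow, ← one_div, lt_div_iff₀ h1, mul_comm]
      exact hk
    rw [h2]; exact h3.trans_le hAval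
  -- error constant and time horizon
  set E₀ : ℝ := ∑ α ∈ A, ∑ β ∈ A.erase α,
      ρ α * ρ β * (2 / |Real.log (Nval p β) - Real.log (Nval p α)|) with hE₀def
  have hE₀0 : 0 ≤ E₀ :=
    Finset.sum_nonneg fun α _ => Finset.sum_nonneg fun β _ => by
      have := hρ0 α; have := hρ0 β; positivity
  have hABpos : 0 < Aval - B := by linarith
  set T : ℝ := (E₀ + 1) / (Aval - B) with hTdef
  have hT0 : 0 < T := by positivity
  have hTkey : T * B + E₀ < T * Aval := by
    have hTc : T * (Aval - B) = E₀ + 1 := by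
      rw [hTdef, div_mul_cancel₀ _ hABpos.ne']
    nlinarith
  -- continuity facts
  have hGcont : Continuous G := by
    rw [hGdef]
    refine continuous_finset_prod _ fun j _ => ?_
    exact ((continuous_const.add (continuous_const.mul (E_cont (p j)))).div_const 2).pow k
  have hintg : ∀ (μ ν : ℕ), Continuous (fun t => E μ t * (starRingEnd ℂ) (E ν t)) :=
    fun μ ν => (E_cont μ).mul (Complex.continuous_conj.comp (E_cont ν))
  set V : ℝ := ∫ t in (0:ℝ)..T, Complex.normSq (G t) with hVdef
  -- expansion of the integral
  have hVc : (V : ℂ) = ∑ α ∈ A, ∑ β ∈ A, (c α * (starRingEnd ℂ) (c β)) *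
      ∫ t in (0:ℝ)..T, E (Nval p α) t * (starRingEnd ℂ) (E (Nval p β) t) := by
    have hint : ∀ t : ℝ, ((Complex.normSq (G t) : ℝ) : ℂ)
        = ∑ α ∈ A, ∑ β ∈ A, (c α * (starRingEnd ℂ) (c β)) *
            (E (Nval p α) t * (starRingEnd ℂ) (E (Nval p β) t)) := by
      intro t
      rw [← Complex.mul_conj, hGexp t, map_sum, Finset.sum_mul_sum]
      refine Finset.sum_congr rfl fun α _ => Finset.sum_congr rfl fun β _ => ?_
      rw [map_mul]
      ring
    rw [hVdef, ← intervalIntegral.integral_ofReal]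
    simp only [hint]
    rw [intervalIntegral.integral_finset_sum (fun α _ => ?_)]
    · refine Finset.sum_congr rfl fun α _ => ?_
      rw [intervalIntegral.integral_finset_sum (fun β _ => ?_)]
      · exact Finset.sum_congr rfl fun β _ => intervalIntegral.integral_const_mul _ _
      · exact (continuous_const.mul (hintg _ _)).intervalIntegrable _ _
    · exact (continuous_finset_sum _ fun β _ =>
        (continuous_const.mul (hintg _ _))).intervalIntegrable _ _
  -- split diagonal and off-diagonal
  set R : ℂ := ∑ α ∈ A, ∑ β ∈ A.erase α, (c α * (starRingEnd ℂ) (c β)) *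
      ∫ t in (0:ℝ)..T, E (Nval p α) t * (starRingEnd ℂ) (E (Nval p β) t) with hRdef
  have hsplit : (V : ℂ) = ((T * Aval : ℝ) : ℂ) + R := by
    rw [hVc, hRdef]
    have hstep : ∀ α ∈ A, (∑ β ∈ A, (c α * (starRingEnd ℂ) (c β)) *
        ∫ t in (0:ℝ)..T, E (Nval p α) t * (starRingEnd ℂ) (E (Nval p β) t))
        = (c α * (starRingEnd ℂ) (c α)) * (T : ℂ)
          + ∑ β ∈ A.erase α, (c α * (starRingEnd ℂ) (c β)) *
            ∫ t in (0:ℝ)..T, E (Nval p α) t * (starRingEnd ℂ) (E (Nval p β) t) := by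
      intro α hα
      rw [← Finset.add_sum_erase A _ hα, integral_diag]
    rw [Finset.sum_congr rfl hstep, Finset.sum_add_distrib]
    congr 1
    rw [hAvaldef, Finset.mul_sum, Complex.ofReal_sum]
    refine Finset.sum_congr rfl fun α _ => ?_
    rw [Complex.mul_conj]
    have hnsq : Complex.normSq (c α) = ρ α ^ 2 := by
      rw [Complex.normSq_eq_norm_sq, hρc]
    rw [hnsq]
    push_cast
    ring
  -- bound the off-diagonal part
  have hRle : ‖R‖ ≤ E₀ := by
    rw [hRdef, hE₀def]
    refine (norm_sum_le _ _).trans (Finset.sum_le_sum fun α hα => ?_)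
    refine (norm_sum_le _ _).trans (Finset.sum_le_sum fun β hβ => ?_)
    have hne : Nval p α ≠ Nval p β := fun h =>
      (Finset.ne_of_mem_erase hβ) ((Nval_inj p hp hinj) h).symm
    rw [norm_mul, norm_mul, RCLike.norm_conj, hρc, hρc]
    refine mul_le_mul_of_nonneg_left ?_ (mul_nonneg (hρ0 α) (hρ0 β))
    exact integral_offdiag (Nval_pos p hp α) (Nval_pos p hp β) hne T
  -- lower bound for V
  have hVlow : T * B < V := by
    have h2 : V = T * Aval + R.re := by
      have : ((V : ℂ)).re = (((T * Aval : ℝ) : ℂ) + R).re := by rw [hsplit]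
      simpa using this
    have h3 := Complex.abs_re_le_norm R
    have h4 := (abs_le.mp h3).1
    linarith
  -- upper bound by contradiction: some time is good for all j
  have key : ∃ t : ℝ, ∀ j, 1 - η < ‖(1 + (starRingEnd ℂ) (w j) * E (p j) t) / 2‖ := by
    by_contra hcon
    push_neg at hcon
    have hfle : ∀ (t : ℝ) (j : Fin m),
        ‖(1 + (starRingEnd ℂ) (w j) * E (p j) t) / 2‖ ≤ 1 := by
      intro t j
      rw [norm_div]
      have h5 : ‖1 + (starRingEnd ℂ) (w j) * E (p j) t‖ ≤ 2 := by
        refine (norm_add_le _ _).trans ?_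
        rw [norm_one, norm_mul, RCLike.norm_conj, hw j, E_norm]
        norm_num
      have h6 : ‖(2 : ℂ)‖ = 2 := by norm_num
      rw [h6]
      linarith
    have hGle : ∀ t : ℝ, Complex.normSq (G t) ≤ B := by
      intro t
      obtain ⟨j₀, hj₀⟩ := hcon t
      have hG1 : ‖G t‖ ≤ (1 - η) ^ k := by
        rw [hGdef]
        calc ‖∏ j : Fin m, ((1 + (starRingEnd ℂ) (w j) * E (p j) t) / 2) ^ k‖
            = ∏ j : Fin m, ‖((1 + (starRingEnd ℂ) (w j) * E (p j) t) / 2) ^ k‖ :=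
              norm_prod _ _
          _ ≤ ‖((1 + (starRingEnd ℂ) (w j₀) * E (p j₀) t) / 2) ^ k‖ := by
              rw [← Finset.mul_prod_erase _ _ (Finset.mem_univ j₀)]
              refine mul_le_of_le_one_right (norm_nonneg _) ?_
              refine Finset.prod_le_one (fun j _ => norm_nonneg _) (fun j _ => ?_)
              rw [norm_pow]
              exact pow_le_one₀ (norm_nonneg _) (hfle t j)
          _ ≤ (1 - η) ^ k := by
              rw [norm_pow]
              exact pow_le_pow_left₀ (norm_nonneg _) hj₀ k
      rw [Complex.normSq_eq_norm_sq, hBdef]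
      exact pow_le_pow_left₀ (norm_nonneg _) hG1 2
    have hVup : V ≤ T * B := by
      rw [hVdef]
      calc (∫ t in (0:ℝ)..T, Complex.normSq (G t))
          ≤ ∫ _t in (0:ℝ)..T, B := by
            refine intervalIntegral.integral_mono_on hT0.le
              ((Complex.continuous_normSq.comp hGcont).intervalIntegrable _ _)
              (intervalIntegrable_const) (fun t _ => hGle t)
        _ = T * B := by
            rw [intervalIntegral.integral_const, smul_eq_mul, sub_zero]
    linarith
  -- extract the approximation
  obtain ⟨t, ht⟩ := key
  refine ⟨t, fun j => ?_⟩
  set z : ℂ := (starRingEnd ℂ) (w j) * E (p j) t with hzdef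
  have hwsq : Complex.normSq (w j) = 1 := by
    rw [Complex.normSq_eq_norm_sq, hw j]; norm_num
  have hz1 : Complex.normSq z = 1 := by
    rw [Complex.normSq_eq_norm_sq, hzdef, norm_mul, RCLike.norm_conj,
      hw j, E_norm]
    norm_num
  have h1 : 2 - 2 * η < ‖1 + z‖ := by
    have h7 := ht j
    rw [norm_div] at h7
    have h6 : ‖(2 : ℂ)‖ = 2 := by norm_num
    rw [h6] at h7
    rw [← hzdef] at h7
    linarith
  have hre : 1 - 4 * η < z.re := by
    have hnorm2 : ‖1 + z‖ ^ 2 = 2 + 2 * z.re := by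
      rw [Complex.sq_norm, Complex.normSq_add, hz1, Complex.normSq_one,
        one_mul, Complex.conj_re]
      ring
    nlinarith [norm_nonneg (1 + z)]
  have hEw : ‖E (p j) t - w j‖ ^ 2 = 2 - 2 * z.re := by
    have hw1 : w j * z = E (p j) t := by
      rw [hzdef, ← mul_assoc, Complex.mul_conj, hwsq]
      simp
    have h8 : E (p j) t - w j = w j * (z - 1) := by
      rw [mul_sub, hw1, mul_one]
    rw [h8, norm_mul, hw j, one_mul, Complex.sq_norm, Complex.normSq_sub,
      hz1, Complex.normSq_one, map_one, mul_one]
    ring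
  have hfin : ‖E (p j) t - w j‖ ^ 2 < ε ^ 2 := by
    rw [hEw, hηdef] at *
    nlinarith
  nlinarith [norm_nonneg (E (p j) t - w j), hε, hfin]

end Kron


theorem lift_bound (χ : ℕ → ℂ) (hχ1 : χ 1 = 1)
    (hχmul : ∀ m n : ℕ, 1 ≤ m → 1 ≤ n → χ (m * n) = χ m * χ n)
    (hχabs : ∀ n : ℕ, 1 ≤ n → ‖χ n‖ = 1)
    {t δ : ℝ} (hδ : 0 < δ) {N : ℕ}
    (hprime : ∀ p : ℕ, p.Prime → p ≤ N → ‖E p t - χ p‖ < δ) :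
    ∀ n : ℕ, 1 ≤ n → n ≤ N → ‖E n t - χ n‖ < n * δ := by
  intro n
  induction n using Nat.strong_induction_on with
  | _ n ih =>
    intro h1 hN
    rcases eq_or_lt_of_le h1 with h | h
    · subst h
      rw [E_one, hχ1, sub_self, norm_zero]
      norm_num
      exact hδ
    · by_cases hp : n.Prime
      · refine (hprime n hp hN).trans_le ?_
        have : (1:ℝ) ≤ n := by exact_mod_cast h1
        nlinarith
      · have hq := Nat.minFac_prime (by omega : n ≠ 1)
        have hdvd := Nat.minFac_dvd n
        obtain ⟨r, hr⟩ := hdvd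
        set q := n.minFac with hqdef
        have hq2 : 2 ≤ q := hq.two_le
        have hr1 : 1 ≤ r := by
          rcases Nat.eq_zero_or_pos r with h0 | h0
          · subst h0; rw [mul_zero] at hr; omega
          · exact h0
        have h2r : 2 * r ≤ q * r := Nat.mul_le_mul_right r hq2
        have hrn : r < n := by omega
        have hq1 : 1 ≤ q := by omega
        have hrN : r ≤ N := hrn.le.trans hN
        have hqN : q ≤ N := (Nat.minFac_le (by omega)).trans hN
        have hEq := hprime q hq hqN
        have hEr := ih r hrn hr1 hrN
        have hE : E n t = E q t * E r t := by rw [hr]; exact E_mul hq1 hr1 t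
        have hχn : χ n = χ q * χ r := by rw [hr]; exact hχmul q r hq1 hr1
        have hkey : E n t - χ n = (E q t - χ q) * E r t + χ q * (E r t - χ r) := by
          rw [hE, hχn]; ring
        have hbound : ‖E n t - χ n‖ ≤ ‖E q t - χ q‖ + ‖E r t - χ r‖ := by
          rw [hkey]
          refine (norm_add_le _ _).trans ?_
          have hq' : ‖χ q‖ = 1 := by exact hχabs q hq1
          rw [norm_mul, norm_mul, E_norm, mul_one, hq', one_mul]
        have hle : (1:ℝ) + r ≤ n := by
          have : 1 + r ≤ n := by omega
          exact_mod_cast this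
        calc ‖E n t - χ n‖ ≤ ‖E q t - χ q‖ + ‖E r t - χ r‖ := hbound
          _ < δ + r * δ := by exact add_lt_add hEq hEr
          _ = (1 + r) * δ := by ring
          _ ≤ n * δ := by nlinarith

lemma log_natCast (n : ℕ) : Complex.log (n : ℂ) = ((Real.log n : ℝ) : ℂ) := by
  rw [Complex.ofReal_log (Nat.cast_nonneg n)]
  norm_num

lemma cpow_translate {n : ℕ} (hn : 1 ≤ n) (s : ℂ) (t : ℝ) :
    (n : ℂ) ^ (-(s + Complex.I * t)) = (n : ℂ) ^ (-s) * E n t := by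
  have hn0 : (n : ℂ) ≠ 0 := Nat.cast_ne_zero.mpr (by omega)
  rw [Complex.cpow_def_of_ne_zero hn0, Complex.cpow_def_of_ne_zero hn0, E, ← Complex.exp_add,
    log_natCast]
  ring_nf

lemma cpow_norm_le {n : ℕ} (hn : 1 ≤ n) {s : ℂ} {θ : ℝ} (hs : θ < s.re) :
    ‖(n : ℂ) ^ (-s)‖ ≤ (n : ℝ) ^ (-θ) := by
  have hpos : (0:ℝ) < (n : ℝ) := by
    have : (1:ℝ) ≤ (n:ℝ) := by exact_mod_cast hn
    linarith
  have h1 : (1:ℝ) ≤ (n : ℝ) := by exact_mod_cast hn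
  have hcast : ((n : ℕ) : ℂ) = (((n : ℝ)) : ℂ) := by push_cast; rfl
  rw [hcast, Complex.norm_cpow_eq_rpow_re_of_pos hpos]
  refine Real.rpow_le_rpow_of_exponent_le h1 ?_
  rw [Complex.neg_re]
  linarith

lemma mem_halfplane {θ : ℝ} {s : ℂ} (hs : s ∈ {s : ℂ | θ < s.re}) (τ : ℝ) :
    s + Complex.I * τ ∈ {s : ℂ | θ < s.re} := by
  simp only [Set.mem_setOf_eq, Complex.add_re, Complex.mul_re, Complex.I_re, Complex.I_im,
    Complex.ofReal_re, Complex.ofReal_im] at *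
  simpa using hs

theorem kron_seq (χ : ℕ → ℂ) (hχ1 : χ 1 = 1)
    (hχmul : ∀ m n : ℕ, 1 ≤ m → 1 ≤ n → χ (m * n) = χ m * χ n)
    (hχabs : ∀ n : ℕ, 1 ≤ n → ‖χ n‖ = 1) :
    ∃ t : ℕ → ℝ, ∀ n : ℕ, 1 ≤ n →
      Tendsto (fun k => E n (t k)) atTop (𝓝 (χ n)) := by
  have hex : ∀ k : ℕ, ∃ t : ℝ, ∀ n, 1 ≤ n → n ≤ k → ‖E n (t) - χ n‖ < 1 / (k + 1) := by
    intro k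
    set P : Finset ℕ := (Finset.range (k + 1)).filter Nat.Prime with hPdef
    set e := P.orderIsoOfFin rfl with hedef
    set p : Fin P.card → ℕ := fun j => (e j : ℕ) with hpdef
    have hmem : ∀ j, p j ∈ P := fun j => (e j).2
    have hp : ∀ j, (p j).Prime := fun j => (Finset.mem_filter.mp (hmem j)).2
    have hinj : Function.Injective p :=
      fun i j hij => e.injective (Subtype.ext hij)
    have hδ : (0:ℝ) < 1 / (((k:ℝ) + 1) * ((k:ℝ) + 1) * 2) := by positivity
    have hw : ∀ j, ‖χ (p j)‖ = 1 := fun j => by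
      exact hχabs (p j) (hp j).pos
    have hle : 1 / (((k:ℝ) + 1) * ((k:ℝ) + 1) * 2) ≤ 2 := by
      rw [div_le_iff₀ (by positivity)]
      nlinarith [sq_nonneg ((k:ℝ))]
    obtain ⟨t, ht⟩ := kron_prime p hp hinj (fun j => χ (p j)) hw hδ hle
    refine ⟨t, fun n hn hnk => ?_⟩
    have hprime : ∀ q : ℕ, q.Prime → q ≤ k →
        ‖E q t - χ q‖ < 1 / (((k:ℝ) + 1) * ((k:ℝ) + 1) * 2) := by
      intro q hq hqk
      have hqP : q ∈ P := Finset.mem_filter.mpr ⟨Finset.mem_range.mpr (by omega), hq⟩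
      have : p (e.symm ⟨q, hqP⟩) = q := by
        rw [hpdef]
        simp
      rw [← this]
      exact ht _
    have := lift_bound χ hχ1 hχmul hχabs hδ hprime n hn hnk
    refine this.trans_le ?_
    have hnr : (n : ℝ) ≤ (k : ℝ) + 1 := by exact_mod_cast hnk.trans (by omega)
    rw [mul_one_div, div_le_div_iff₀ (by positivity) (by positivity)]
    nlinarith [hnr, Nat.cast_nonneg (α := ℝ) n]
  choose t ht using hex
  refine ⟨t, fun n hn => ?_⟩
  rw [Metric.tendsto_atTop]
  intro ε hε
  obtain ⟨K₀, hK₀⟩ := exists_nat_gt (1 / ε)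
  refine ⟨max n K₀, fun k hk => ?_⟩
  have hkn : n ≤ k := le_trans (le_max_left _ _) hk
  have hkK : (K₀ : ℝ) ≤ k := by exact_mod_cast le_trans (le_max_right _ _) hk
  rw [dist_eq_norm]
  refine (ht k n hn hkn).trans_le ?_
  rw [div_le_iff₀ (by positivity)]
  have h1 : 1 / ε < (k:ℝ) + 1 := by linarith
  rw [div_lt_iff₀ hε] at h1
  linarith

theorem core (a χ : ℕ → ℂ) (hχ1 : χ 1 = 1)
    (hχmul : ∀ m n : ℕ, 1 ≤ m → 1 ≤ n → χ (m * n) = χ m * χ n)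
    (hχabs : ∀ n : ℕ, 1 ≤ n → ‖χ n‖ = 1)
    (θ : ℝ) (f : ℂ → ℂ)
    (hunif : TendstoUniformlyOn
      (fun (N : ℕ) (s : ℂ) => ∑ n ∈ Finset.Icc 1 N, a n * (n : ℂ) ^ (-s))
      f atTop {s : ℂ | θ < s.re}) :
    ∃ (fχ : ℂ → ℂ) (t : ℕ → ℝ),
      TendstoUniformlyOn
        (fun (N : ℕ) (s : ℂ) => ∑ n ∈ Finset.Icc 1 N, a n * χ n * (n : ℂ) ^ (-s))
        fχ atTop {s : ℂ | θ < s.re} ∧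
      TendstoUniformlyOn (fun (k : ℕ) (s : ℂ) => f (s + Complex.I * (t k)))
        fχ atTop {s : ℂ | θ < s.re} := by
  classical
  set H : Set ℂ := {s : ℂ | θ < s.re} with hHdef
  set S : ℕ → ℂ → ℂ := fun N s => ∑ n ∈ Finset.Icc 1 N, a n * (n : ℂ) ^ (-s) with hSdef
  set Sχ : ℕ → ℂ → ℂ := fun N s => ∑ n ∈ Finset.Icc 1 N, a n * χ n * (n : ℂ) ^ (-s) with hSχdef
  obtain ⟨t, ht⟩ := kron_seq χ hχ1 hχmul hχabs
  have hone : ∀ {n N : ℕ}, n ∈ Finset.Icc 1 N → 1 ≤ n := fun hn => (Finset.mem_Icc.mp hn).1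
  have htrans : ∀ (N : ℕ) (s : ℂ) (τ : ℝ),
      S N (s + Complex.I * τ) = ∑ n ∈ Finset.Icc 1 N, (a n * (n : ℂ) ^ (-s)) * E n τ := by
    intro N s τ
    refine Finset.sum_congr rfl fun n hn => ?_
    rw [cpow_translate (hone hn) s τ]
    ring
  have htends : ∀ (N : ℕ) (s : ℂ),
      Tendsto (fun k => S N (s + Complex.I * (t k))) atTop (𝓝 (Sχ N s)) := by
    intro N s
    simp only [htrans]
    have : Sχ N s = ∑ n ∈ Finset.Icc 1 N, (a n * (n : ℂ) ^ (-s)) * χ n := by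
      rw [hSχdef]
      exact Finset.sum_congr rfl fun n hn => by ring
    rw [this]
    exact tendsto_finset_sum _ fun n hn => (ht n (hone hn)).const_mul _
  -- uniform Cauchy property of the twisted partial sums
  have hcauchy : UniformCauchySeqOn Sχ atTop H := by
    rw [Metric.uniformCauchySeqOn_iff]
    intro ε hε
    have hbase := Metric.uniformCauchySeqOn_iff.mp hunif.uniformCauchySeqOn (ε / 2)
      (by linarith)
    obtain ⟨N₀, hN₀⟩ := hbase
    refine ⟨N₀, fun M hM N hN s hs => ?_⟩
    have h1 : Tendsto (fun k => dist (S M (s + Complex.I * (t k)))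
        (S N (s + Complex.I * (t k)))) atTop (𝓝 (dist (Sχ M s) (Sχ N s))) :=
      (htends M s).dist (htends N s)
    have h2 : ∀ k, dist (S M (s + Complex.I * (t k))) (S N (s + Complex.I * (t k))) ≤ ε / 2 :=
      fun k => (hN₀ M hM N hN _ (mem_halfplane hs (t k))).le
    have := le_of_tendsto h1 (Eventually.of_forall h2)
    linarith
  -- pointwise limits and the limit function
  have hptlim : ∀ s ∈ H, ∃ l, Tendsto (fun N => Sχ N s) atTop (𝓝 l) := by
    intro s hs
    refine cauchySeq_tendsto_of_complete ?_
    rw [Metric.cauchySeq_iff]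
    intro ε hε
    obtain ⟨N₀, hN₀⟩ := Metric.uniformCauchySeqOn_iff.mp hcauchy ε hε
    exact ⟨N₀, fun M hM N hN => hN₀ M hM N hN s hs⟩
  set fχ : ℂ → ℂ := fun s => limUnder atTop (fun N => Sχ N s) with hfχdef
  have hpt : ∀ s ∈ H, Tendsto (fun N => Sχ N s) atTop (𝓝 (fχ s)) := by
    intro s hs
    obtain ⟨l, hl⟩ := hptlim s hs
    have heq : fχ s = l := hl.limUnder_eq
    rwa [heq]
  have hSχu : TendstoUniformlyOn Sχ fχ atTop H :=
    hcauchy.tendstoUniformlyOn_of_tendsto hpt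
  refine ⟨fχ, t, hSχu, ?_⟩
  -- translates of f converge uniformly to fχ
  rw [Metric.tendstoUniformlyOn_iff]
  intro ε hε
  have e1 := Metric.tendstoUniformlyOn_iff.mp hunif (ε / 3) (by linarith)
  have e2 := Metric.tendstoUniformlyOn_iff.mp hSχu (ε / 3) (by linarith)
  obtain ⟨N, hN1, hN2⟩ := (e1.and e2).exists
  have hsum0 : Tendsto (fun k => ∑ n ∈ Finset.Icc 1 N,
      ‖a n‖ * (n : ℝ) ^ (-θ) * ‖χ n - E n (t k)‖) atTop (𝓝 0) := by
    have : ∀ n ∈ Finset.Icc 1 N, Tendsto (fun k =>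
        ‖a n‖ * (n : ℝ) ^ (-θ) * ‖χ n - E n (t k)‖) atTop (𝓝 0) := by
      intro n hn
      have h3 : Tendsto (fun k => χ n - E n (t k)) atTop (𝓝 0) := by
        have := (tendsto_const_nhds (x := χ n) (f := atTop (α := ℕ))).sub (ht n (hone hn))
        simpa using this
      have h4 := (h3.norm).const_mul (‖a n‖ * (n : ℝ) ^ (-θ))
      simpa using h4
    have h5 := tendsto_finset_sum _ this
    simpa using h5
  have e3 : ∀ᶠ k in atTop, ∑ n ∈ Finset.Icc 1 N,
      ‖a n‖ * (n : ℝ) ^ (-θ) * ‖χ n - E n (t k)‖ < ε / 3 :=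
    hsum0.eventually_lt_const (by linarith)
  filter_upwards [e3] with k hk
  intro s hs
  have hmid : dist (Sχ N s) (S N (s + Complex.I * (t k))) ≤ ε / 3 := by
    rw [dist_eq_norm, htrans N s (t k), hSχdef, ← Finset.sum_sub_distrib]
    have heq : ∀ n ∈ Finset.Icc 1 N,
        a n * χ n * (n : ℂ) ^ (-s) - (a n * (n : ℂ) ^ (-s)) * E n (t k)
          = (a n * (n : ℂ) ^ (-s)) * (χ n - E n (t k)) := fun n hn => by ring
    rw [Finset.sum_congr rfl heq]
    refine (norm_sum_le _ _).trans ?_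
    refine le_trans (Finset.sum_le_sum (fun n hn => ?_)) hk.le
    rw [norm_mul, norm_mul]
    have := cpow_norm_le (hone hn) (hs : θ < s.re)
    exact mul_le_mul_of_nonneg_right
      (mul_le_mul_of_nonneg_left this (norm_nonneg _)) (norm_nonneg _)
  have hlast := hN1 _ (mem_halfplane hs (t k))
  have hfirst := hN2 s hs
  have htri := dist_triangle4 (fχ s) (Sχ N s) (S N (s + Complex.I * (t k)))
    (f (s + Complex.I * (t k)))
  rw [dist_comm (S N (s + Complex.I * (t k))) (f (s + Complex.I * (t k)))] at htri
  calc dist (fχ s) (f (s + Complex.I * (t k))) ≤ _ := htri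
    _ < ε := by linarith

theorem hur {U : Set ℂ} (hU : IsOpen U) (hUc : IsPreconnected U)
    {g : ℕ → ℂ → ℂ} {h : ℂ → ℂ} (hg : ∀ k, DifferentiableOn ℂ (g k) U)
    (hguc : TendstoUniformlyOn g h atTop U) {s₀ : ℂ} (hs₀ : s₀ ∈ U) :
    (∃ k, ∃ s ∈ U, g k s = h s₀) ∨ (∀ s ∈ U, h s = h s₀) := by
  have hhd : DifferentiableOn ℂ h U :=
    hguc.tendstoLocallyUniformlyOn.differentiableOn (Eventually.of_forall hg) hU
  have hha : AnalyticOnNhd ℂ h U := hhd.analyticOnNhd hU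
  by_cases hconst : (fun s => h s - h s₀) =ᶠ[𝓝 s₀] 0
  · right
    have hev : h =ᶠ[𝓝 s₀] (fun _ => h s₀) := by
      filter_upwards [hconst] with x hx
      simpa [sub_eq_zero] using hx
    exact fun s hs =>
      hha.eqOn_of_preconnected_of_eventuallyEq analyticOnNhd_const hUc hs₀ hev hs
  · left
    have hsub : AnalyticAt ℂ (fun s => h s - h s₀) s₀ := (hha s₀ hs₀).sub analyticAt_const
    have hne : ∀ᶠ s in 𝓝[≠] s₀, h s - h s₀ ≠ 0 :=
      hsub.eventually_eq_zero_or_eventually_ne_zero.resolve_left hconst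
    have h1 : ∀ᶠ s in 𝓝 s₀, s ∈ U ∧ (s ≠ s₀ → h s - h s₀ ≠ 0) := by
      have e1 : ∀ᶠ s in 𝓝 s₀, s ∈ U := hU.mem_nhds hs₀
      have e2 : ∀ᶠ s in 𝓝 s₀, s ≠ s₀ → h s - h s₀ ≠ 0 := by
        have := eventually_nhdsWithin_iff.mp hne
        filter_upwards [this] with x hx hxne
        exact hx (Set.mem_compl_singleton_iff.mpr hxne)
      exact e1.and e2
    obtain ⟨r, hr0, hball⟩ := Metric.eventually_nhds_iff_ball.mp h1
    set r' : ℝ := r / 2 with hr'def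
    have hr'0 : 0 < r' := by positivity
    have hbsub : Metric.closedBall s₀ r' ⊆ Metric.ball s₀ r := by
      intro x hx
      rw [Metric.mem_closedBall] at hx
      rw [Metric.mem_ball]
      linarith
    have hbU : Metric.closedBall s₀ r' ⊆ U := fun x hx => (hball x (hbsub hx)).1
    -- minimum of ‖h - h s₀‖ on the sphere
    have hsph : (Metric.sphere s₀ r').Nonempty :=
      NormedSpace.sphere_nonempty.mpr hr'0.le
    have hsphsub : Metric.sphere s₀ r' ⊆ Metric.closedBall s₀ r' := Metric.sphere_subset_closedBall
    have hcont : ContinuousOn (fun s => ‖h s - h s₀‖) (Metric.sphere s₀ r') :=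
      (((hhd.continuousOn.mono (hsphsub.trans hbU)).sub continuousOn_const).norm)
    obtain ⟨y, hy, hymin'⟩ := (isCompact_sphere s₀ r').exists_isMinOn hsph hcont
    have hymin : ∀ z ∈ Metric.sphere s₀ r', ‖h y - h s₀‖ ≤ ‖h z - h s₀‖ :=
      fun z hz => hymin' hz
    set mv : ℝ := ‖h y - h s₀‖ with hmvdef
    have hyne : y ≠ s₀ := by
      intro hcon
      have := Metric.mem_sphere.mp hy
      rw [hcon] at this
      simp at this
      linarith
    have hm0 : 0 < mv := by
      rw [hmvdef, norm_pos_iff]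
      exact (hball y (hbsub (hsphsub hy))).2 hyne
    -- pick k with uniform closeness m/2
    have e4 := Metric.tendstoUniformlyOn_iff.mp hguc (mv / 2) (by linarith)
    obtain ⟨k, hk⟩ := e4.exists
    refine ⟨k, ?_⟩
    by_contra hnone
    push_neg at hnone
    -- consider 1/(g k - c) on the ball and apply the maximum principle
    set F : ℂ → ℂ := fun s => (g k s - h s₀)⁻¹ with hFdef
    have hgne : ∀ x ∈ Metric.closedBall s₀ r', g k x - h s₀ ≠ 0 := by
      intro x hx
      exact sub_ne_zero_of_ne (hnone x (hbU hx))
    have hFd : DiffContOnCl ℂ F (Metric.ball s₀ r') := by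
      constructor
      · refine DifferentiableOn.inv ?_ ?_
        · exact ((hg k).mono ((Metric.ball_subset_closedBall).trans hbU)).sub
            (differentiableOn_const _)
        · exact fun x hx => hgne x (Metric.ball_subset_closedBall hx)
      · rw [closure_ball s₀ hr'0.ne']
        refine ContinuousOn.inv₀ ?_ hgne
        exact ((hg k).continuousOn.mono hbU).sub continuousOn_const
    have hfront : ∀ z ∈ frontier (Metric.ball s₀ r'), ‖F z‖ ≤ 2 / mv := by
      intro z hz
      rw [frontier_ball s₀ hr'0.ne'] at hz
      have hzU : z ∈ U := hbU (hsphsub hz)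
      have hlow : mv / 2 ≤ ‖g k z - h s₀‖ := by
        have t1 : mv ≤ ‖h z - h s₀‖ := hymin z hz
        have t2 : dist (h z) (g k z) < mv / 2 := hk z hzU
        rw [dist_eq_norm] at t2
        have t3 : ‖h z - h s₀‖ - ‖h z - g k z‖ ≤ ‖g k z - h s₀‖ := by
          have := norm_sub_norm_le (h z - h s₀) (h z - g k z)
          have heq2 : (h z - h s₀) - (h z - g k z) = g k z - h s₀ := by ring
          rwa [heq2] at this
        linarith
      rw [hFdef]
      simp only [norm_inv]
      have h2m : (2:ℝ) / mv = (mv / 2)⁻¹ := by rw [inv_div]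
      rw [h2m]
      exact inv_anti₀ (by positivity) hlow
    -- maximum principle
    have hmax := Complex.norm_le_of_forall_mem_frontier_norm_le Metric.isBounded_ball hFd
      hfront (z := s₀) (by rw [closure_ball s₀ hr'0.ne']; exact Metric.mem_closedBall_self hr'0.le)
    -- contradiction with closeness at s₀
    have hs₀close : ‖g k s₀ - h s₀‖ < mv / 2 := by
      have := hk s₀ hs₀
      rw [dist_eq_norm, norm_sub_rev] at this
      exact this
    have hs₀pos : 0 < ‖g k s₀ - h s₀‖ := norm_pos_iff.mpr
      (hgne s₀ (Metric.mem_closedBall_self hr'0.le))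
    rw [hFdef] at hmax
    simp only [norm_inv] at hmax
    have hinv : ‖g k s₀ - h s₀‖ * ‖g k s₀ - h s₀‖⁻¹ = 1 := mul_inv_cancel₀ hs₀pos.ne'
    have k1 := mul_le_mul_of_nonneg_left hmax hs₀pos.le
    rw [hinv] at k1
    have k2 : ‖g k s₀ - h s₀‖ * (2 / mv) < (mv / 2) * (2 / mv) :=
      mul_lt_mul_of_pos_right hs₀close (by positivity)
    have k3 : (mv / 2) * (2 / mv) = 1 := by field_simp
    linarith

lemma partial_diff (b : ℕ → ℂ) (N : ℕ) :
    Differentiable ℂ (fun s : ℂ => ∑ n ∈ Finset.Icc 1 N, b n * (n : ℂ) ^ (-s)) := by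
  refine Differentiable.fun_sum fun n hn => ?_
  have hn0 : (n : ℂ) ≠ 0 := Nat.cast_ne_zero.mpr (by
    have := (Finset.mem_Icc.mp hn).1; omega)
  exact ((differentiable_id.neg).const_cpow (Or.inl hn0)).const_mul _

lemma ulimit_diffOn {F : ℕ → ℂ → ℂ} {f : ℂ → ℂ} {U : Set ℂ} (hU : IsOpen U)
    (hd : ∀ N, Differentiable ℂ (F N)) (hF : TendstoUniformlyOn F f atTop U) :
    DifferentiableOn ℂ f U :=
  hF.tendstoLocallyUniformlyOn.differentiableOn
    (Eventually.of_forall fun N => (hd N).differentiableOn) hU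

end TwistAux

open TwistAux


open TwistAux

/-- If the partial sums of `f(s) = ∑ a(n) n^{-s}` converge uniformly on the
half-plane `Re s > θ`, then the twisted series `f_χ(s) = ∑ a(n) χ(n) n^{-s}` also converges
there and the images of the half-plane under `f` and `f_χ` coincide. -/
theorem twist_preserves_image
    (a χ : ℕ → ℂ)
    (hχ1 : χ 1 = 1)
    (hχmul : ∀ m n : ℕ, 1 ≤ m → 1 ≤ n → χ (m * n) = χ m * χ n)
    (hχabs : ∀ n : ℕ, 1 ≤ n → ‖χ n‖ = 1)
    (θ : ℝ) (f : ℂ → ℂ)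
    (hunif : TendstoUniformlyOn
      (fun (N : ℕ) (s : ℂ) => ∑ n ∈ Finset.Icc 1 N, a n * (n : ℂ) ^ (-s))
      f atTop {s : ℂ | θ < s.re}) :
    ∃ fχ : ℂ → ℂ,
      (∀ s : ℂ, θ < s.re →
        Tendsto (fun N : ℕ => ∑ n ∈ Finset.Icc 1 N, a n * χ n * (n : ℂ) ^ (-s))
          atTop (𝓝 (fχ s))) ∧
      fχ '' {s : ℂ | θ < s.re} = f '' {s : ℂ | θ < s.re} := by
  classical
  obtain ⟨fχ, t, hSχu, hTf⟩ := core a χ hχ1 hχmul hχabs θ f hunif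
  have hχne : ∀ n : ℕ, 1 ≤ n → χ n ≠ 0 := by
    intro n hn h0
    have := hχabs n hn
    rw [h0] at this
    simp at this
  have hχ1' : (χ 1)⁻¹ = 1 := by rw [hχ1]; norm_num
  have hχmul' : ∀ m n : ℕ, 1 ≤ m → 1 ≤ n → (χ (m * n))⁻¹ = (χ m)⁻¹ * (χ n)⁻¹ := by
    intro m n hm hn
    rw [hχmul m n hm hn, mul_inv]
  have hχabs' : ∀ n : ℕ, 1 ≤ n → ‖(χ n)⁻¹‖ = 1 := by
    intro n hn
    rw [norm_inv, hχabs n hn]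
    norm_num
  obtain ⟨g, u, hSu', hTfχ⟩ := core (fun n => a n * χ n) (fun n => (χ n)⁻¹)
    hχ1' hχmul' hχabs' θ fχ hSχu
  have hfun : (fun (N : ℕ) (s : ℂ) =>
      ∑ n ∈ Finset.Icc 1 N, a n * χ n * (χ n)⁻¹ * (n : ℂ) ^ (-s))
      = fun (N : ℕ) (s : ℂ) => ∑ n ∈ Finset.Icc 1 N, a n * (n : ℂ) ^ (-s) := by
    funext N s
    refine Finset.sum_congr rfl fun n hn => ?_
    have h1 : 1 ≤ n := (Finset.mem_Icc.mp hn).1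
    rw [mul_assoc (a n), mul_inv_cancel₀ (hχne n h1), mul_one]
  rw [hfun] at hSu'
  -- g agrees with f on the half-plane
  set H : Set ℂ := {s : ℂ | θ < s.re} with hH
  have hgf : Set.EqOn g f H := fun s hs =>
    tendsto_nhds_unique (hSu'.tendsto_at hs) (hunif.tendsto_at hs)
  have hTfχ' : TendstoUniformlyOn (fun (k : ℕ) (s : ℂ) => fχ (s + Complex.I * (u k)))
      f atTop H := hTfχ.congr_right hgf
  -- topology of the half-plane
  have hopen : IsOpen H := isOpen_lt continuous_const Complex.continuous_re
  have hconn : IsPreconnected H := (convex_halfSpace_re_gt θ).isPreconnected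
  have hfd : DifferentiableOn ℂ f H := ulimit_diffOn hopen (partial_diff a) hunif
  have hfχd : DifferentiableOn ℂ fχ H :=
    ulimit_diffOn hopen (partial_diff (fun n => a n * χ n)) hSχu
  have hgdiff1 : ∀ k, DifferentiableOn ℂ (fun s => f (s + Complex.I * (t k))) H := by
    intro k
    exact hfd.comp ((differentiable_id.add_const _).differentiableOn)
      (fun x hx => mem_halfplane hx _)
  have hgdiff2 : ∀ k, DifferentiableOn ℂ (fun s => fχ (s + Complex.I * (u k))) H := by
    intro k
    exact hfχd.comp ((differentiable_id.add_const _).differentiableOn)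
      (fun x hx => mem_halfplane hx _)
  refine ⟨fχ, fun s hs => hSχu.tendsto_at hs, ?_⟩
  by_cases hcase : ∀ s₁ ∈ H, ∀ s₂ ∈ H, fχ s₁ = fχ s₂
  · -- constant case: fχ = f on H
    have hfeq : Set.EqOn fχ f H := by
      intro s hs
      have h1 : Tendsto (fun k => fχ (s + Complex.I * (u k))) atTop (𝓝 (f s)) :=
        hTfχ'.tendsto_at hs
      have h2 : (fun k => fχ (s + Complex.I * (u k))) = fun _ => fχ s :=
        funext fun k => hcase _ (mem_halfplane hs _) s hs
      rw [h2] at h1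
      exact (tendsto_nhds_unique tendsto_const_nhds h1)
    exact Set.image_congr hfeq
  · push_neg at hcase
    obtain ⟨s₁, hs₁, s₂, hs₂, hne⟩ := hcase
    apply Set.Subset.antisymm
    · rintro _ ⟨s₀, hs₀H, rfl⟩
      rcases hur hopen hconn hgdiff1 hTf hs₀H with ⟨k, s, hsH, hval⟩ | hconst
      · exact ⟨s + Complex.I * (t k), mem_halfplane hsH _, hval⟩
      · exact absurd ((hconst s₁ hs₁).trans (hconst s₂ hs₂).symm) hne
    · rintro _ ⟨s₀, hs₀H, rfl⟩
      rcases hur hopen hconn hgdiff2 hTfχ' hs₀H with ⟨k, s, hsH, hval⟩ | hconst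
      · exact ⟨s + Complex.I * (u k), mem_halfplane hsH _, hval⟩
      · exfalso
        have hv : ∀ s ∈ H, fχ s = f s₀ := by
          intro s hs
          have h1 : Tendsto (fun k => f (s + Complex.I * (t k))) atTop (𝓝 (fχ s)) :=
            hTf.tendsto_at hs
          have h2 : (fun k => f (s + Complex.I * (t k))) = fun _ => f s₀ :=
            funext fun k => hconst _ (mem_halfplane hs _)
          rw [h2] at h1
          exact tendsto_nhds_unique h1 tendsto_const_nhds
        exact hne ((hv s₁ hs₁).trans (hv s₂ hs₂).symm)
end
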